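/- Let M : Fin n → Fin m → Bool. Say M contains pattern P3 if there exist rows i < j and columns p < q < r with M i q = true, M j p = true, M j q = false, and M j r = true. If M contains pattern P3, then there is no Stick order for M, i.e., there are no strictly monotone ra : Fin n → ℕ and rb : Fin m → ℕ with disjoint ranges such that ∀ j p, M j p = true ↔ (ra j < rb p ∧ (∃ q ≥ p, M j q = true) ∧ (∃ i ≤ j, M i p = true)). -/
import Mathlib


def StickOrder {n m : ℕ} (M : Fin n → Fin m → Bool) : Prop :=
  ∃ (ra : Fin n → ℕ) (rb : Fin m → ℕ),
    StrictMono ra ∧ StrictMono rb ∧ (∀ i p, ra i ≠ rb p) ∧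
    ∀ j p, M j p = true ↔
      (ra j < rb p ∧ (∃ q, p ≤ q ∧ M j q = true) ∧ (∃ i, i ≤ j ∧ M i p = true))

def HEdge {n m : ℕ} (M : Fin n → Fin m → Bool) :
    Fin n ⊕ Fin m → Fin n ⊕ Fin m → Prop
  | Sum.inl i, Sum.inl i' => i < i'
  | Sum.inr p, Sum.inr p' => p < p'
  | Sum.inl i, Sum.inr p => M i p = true
  | Sum.inr p, Sum.inl j =>
      ∃ i, i < j ∧ ∃ q, p < q ∧ M i p = true ∧ M j p = false ∧ M j q = true

def P1 {n m : ℕ} (M : Fin n → Fin m → Bool) : Prop :=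
  ∃ i j k : Fin n, i < j ∧ j < k ∧ ∃ p q r : Fin m, p < q ∧ q < r ∧
    M i q = true ∧ M j q = false ∧ M j r = true ∧ M k p = true

def P2 {n m : ℕ} (M : Fin n → Fin m → Bool) : Prop :=
  ∃ i j k : Fin n, i < j ∧ j < k ∧ ∃ p q : Fin m, p < q ∧
    M i p = true ∧ M j p = false ∧ M j q = true ∧ M k p = true

def P3 {n m : ℕ} (M : Fin n → Fin m → Bool) : Prop :=
  ∃ i j : Fin n, i < j ∧ ∃ p q r : Fin m, p < q ∧ q < r ∧
    M i q = true ∧ M j p = true ∧ M j q = false ∧ M j r = true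

theorem stmt_4 {n m : ℕ} (M : Fin n → Fin m → Bool)
    (h : P3 M) :
    ¬ StickOrder M := by
  rintro ⟨ra, rb, hra, hrb, hne, hiff⟩
  obtain ⟨i, j, hij, p, q, r, hpq, hqr, hiq, hjp, hjq, hjr⟩ := h
  -- From M j q = false: rb q ≤ ra j
  have h1 : ¬ (ra j < rb q ∧ (∃ q', q ≤ q' ∧ M j q' = true) ∧ ∃ i', i' ≤ j ∧ M i' q = true) := by
    intro hc
    have := (hiff j q).2 hc
    simp [hjq] at this
  have h2 : ∃ q', q ≤ q' ∧ M j q' = true := ⟨r, le_of_lt hqr, hjr⟩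
  have h3 : ∃ i', i' ≤ j ∧ M i' q = true := ⟨i, le_of_lt hij, hiq⟩
  have h4 : ¬ ra j < rb q := fun hlt => h1 ⟨hlt, h2, h3⟩
  have h5 : rb q < ra j := lt_of_le_of_ne (not_lt.1 h4) (fun e => hne j q e.symm)
  have h6 : ra j < rb p := ((hiff j p).1 hjp).1
  exact absurd (h6.trans (hrb hpq)) (not_lt.2 (le_of_lt h5))
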